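/- Let E be a nontrivial finite-dimensional real inner product space and let ρ and A be self-adjoint endomorphisms of E. Assume: (i) ρ is positive definite; (ii) for every unit vector v ∈ E one has 2⟪ρ v, v⟫ < trace ρ (i.e. 2ρ − (trace ρ)·id is negative definite); (iii) for all orthonormal vectors v, w ∈ E one has ⟪A v, v⟫ + ⟪A w, w⟫ ≥ 0. Then trace (ρ ∘ A) ≥ 0, and trace (ρ ∘ A) = 0 holds if and only if A = 0. -/
import Mathlib

open RealInnerProductSpace

section aux

lemma key_sum_lemma {ι : Type*} [Fintype ι] [Nonempty ι] [DecidableEq ι] (r a : ι → ℝ)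
    (hr : ∀ i, 0 < r i) (hκ : ∀ i, 2 * r i < ∑ j, r j)
    (ha : ∀ i j, i ≠ j → 0 ≤ a i + a j) :
    0 ≤ ∑ i, a i * r i ∧ (∑ i, a i * r i = 0 ↔ ∀ i, a i = 0) := by
  obtain ⟨m, -, hm⟩ := Finset.exists_min_image Finset.univ a
    ⟨Classical.arbitrary ι, Finset.mem_univ _⟩
  by_cases h0 : 0 ≤ a m
  · have hterm : ∀ i ∈ Finset.univ, 0 ≤ a i * r i := fun i _ =>
      mul_nonneg (h0.trans (hm i (Finset.mem_univ i))) (hr i).le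
    refine ⟨Finset.sum_nonneg hterm, ?_⟩
    rw [Finset.sum_eq_zero_iff_of_nonneg hterm]
    constructor
    · intro h i
      have := h i (Finset.mem_univ i)
      exact (mul_eq_zero.mp this).resolve_right (hr i).ne'
    · intro h i _
      rw [h i, zero_mul]
  · push_neg at h0
    have hstrict : 0 < ∑ i, a i * r i := by
      have hsplit : ∑ i, a i * r i
          = a m * r m + ∑ i ∈ Finset.univ.erase m, a i * r i :=
        (Finset.add_sum_erase _ _ (Finset.mem_univ m)).symm
      have hsplit' : ∑ i, r i = r m + ∑ i ∈ Finset.univ.erase m, r i :=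
        (Finset.add_sum_erase _ _ (Finset.mem_univ m)).symm
      have hbound : ∑ i ∈ Finset.univ.erase m, (-a m) * r i
          ≤ ∑ i ∈ Finset.univ.erase m, a i * r i := by
        refine Finset.sum_le_sum fun i hi => ?_
        have hne : i ≠ m := Finset.ne_of_mem_erase hi
        have := ha i m hne
        have : -a m ≤ a i := by linarith
        exact mul_le_mul_of_nonneg_right this (hr i).le
      rw [← Finset.mul_sum] at hbound
      have hκm := hκ m
      nlinarith [hr m]
    refine ⟨hstrict.le, ?_, ?_⟩
    · intro h; exact absurd h hstrict.ne'
    · intro h; exact absurd (h m) h0.ne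

lemma trace_eq_sum_inner_onb {E : Type*} [NormedAddCommGroup E] [InnerProductSpace ℝ E]
    [FiniteDimensional ℝ E] {n : ℕ} (b : OrthonormalBasis (Fin n) ℝ E) (T : E →ₗ[ℝ] E) :
    LinearMap.trace ℝ E T = ∑ i, ⟪b i, T (b i)⟫ := by
  rw [LinearMap.trace_eq_matrix_trace ℝ b.toBasis, Matrix.trace]
  congr 1
  ext i
  rw [Matrix.diag_apply, LinearMap.toMatrix_apply, OrthonormalBasis.coe_toBasis,
    OrthonormalBasis.coe_toBasis_repr_apply, OrthonormalBasis.repr_apply_apply]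

end aux

/-- If `ρ` is positive definite, `2ρ - (tr ρ)·id` is negative definite, and the sum of the
values of `A` on any two orthonormal vectors is nonnegative, then `tr (ρ ∘ A) ≥ 0`, with
equality iff `A = 0`. -/
theorem trace_comp_nonneg_of_pairwise (E : Type*) [NormedAddCommGroup E]
    [InnerProductSpace ℝ E] [FiniteDimensional ℝ E] [Nontrivial E]
    (ρ A : E →ₗ[ℝ] E) (hρ : LinearMap.IsSymmetric ρ) (hA : LinearMap.IsSymmetric A)
    (hρpos : ∀ v : E, v ≠ 0 → 0 < ⟪ρ v, v⟫)
    (hρκ : ∀ v : E, ‖v‖ = 1 → 2 * ⟪ρ v, v⟫ < LinearMap.trace ℝ E ρ)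
    (hApair : ∀ v w : E, ‖v‖ = 1 → ‖w‖ = 1 → ⟪v, w⟫ = 0 → ⟪A v, v⟫ + ⟪A w, w⟫ ≥ 0) :
    (LinearMap.trace ℝ E (ρ ∘ₗ A) ≥ 0) ∧
      (LinearMap.trace ℝ E (ρ ∘ₗ A) = 0 ↔ A = 0) := by
  have hn : Module.finrank ℝ E = Module.finrank ℝ E := rfl
  set b := hA.eigenvectorBasis hn with hb
  set a : Fin (Module.finrank ℝ E) → ℝ := hA.eigenvalues hn with ha
  have hAb : ∀ i, A (b i) = a i • b i := fun i => hA.apply_eigenvectorBasis hn i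
  have hnorm : ∀ i, ‖b i‖ = 1 := fun i => b.orthonormal.1 i
  have hne : ∀ i, b i ≠ 0 := fun i => by
    intro h; have := hnorm i; rw [h, norm_zero] at this; norm_num at this
  have hpos : 0 < Module.finrank ℝ E := Module.finrank_pos
  haveI : Nonempty (Fin (Module.finrank ℝ E)) := ⟨⟨0, hpos⟩⟩
  set r : Fin (Module.finrank ℝ E) → ℝ := fun i => ⟪ρ (b i), b i⟫ with hrdef
  have hr : ∀ i, 0 < r i := fun i => hρpos (b i) (hne i)
  have htrρ : LinearMap.trace ℝ E ρ = ∑ j, r j := by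
    rw [trace_eq_sum_inner_onb b ρ]
    exact Finset.sum_congr rfl fun i _ => real_inner_comm _ _
  have hκ : ∀ i, 2 * r i < ∑ j, r j := fun i => by
    have := hρκ (b i) (hnorm i); rwa [htrρ] at this
  have hpair : ∀ i j, i ≠ j → 0 ≤ a i + a j := by
    intro i j hij
    have horth : ⟪b i, b j⟫ = 0 := b.orthonormal.2 hij
    have h := hApair (b i) (b j) (hnorm i) (hnorm j) horth
    have hi : ⟪A (b i), b i⟫ = a i := by
      rw [hAb i, real_inner_smul_left, real_inner_self_eq_norm_sq, hnorm i]; ring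
    have hj : ⟪A (b j), b j⟫ = a j := by
      rw [hAb j, real_inner_smul_left, real_inner_self_eq_norm_sq, hnorm j]; ring
    rw [hi, hj] at h; linarith
  have htr : LinearMap.trace ℝ E (ρ ∘ₗ A) = ∑ i, a i * r i := by
    rw [trace_eq_sum_inner_onb b]
    refine Finset.sum_congr rfl fun i _ => ?_
    rw [LinearMap.comp_apply, hAb i, map_smul, real_inner_smul_right, real_inner_comm]
  obtain ⟨h1, h2⟩ := key_sum_lemma r a hr hκ hpair
  rw [htr]
  refine ⟨h1, h2.trans ?_⟩
  constructor
  · intro h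
    apply b.toBasis.ext
    intro i
    simp only [OrthonormalBasis.coe_toBasis, LinearMap.zero_apply]
    rw [hAb i, h i, zero_smul]
  · intro h i
    have := hAb i
    rw [h, LinearMap.zero_apply] at this
    have := this.symm
    rcases smul_eq_zero.mp this with h' | h'
    · exact h'
    · exact absurd h' (hne i)
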